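/- arXiv:2206.06169 — 2 statements merged into one kernel-verified Lean document; each statement's English description precedes it below -/
import Mathlib

section
/- Conversely, if A ∈ ℝ^{K×K} has nonnegative entries and trace(exp(A)) = K, then the directed graph whose edges are the pairs (i,j) with A_{ij} > 0 contains no directed cycle. -/
open Matrix

lemma pow_entry_nonneg {K : ℕ} (A : Matrix (Fin K) (Fin K) ℝ)
    (hA : ∀ i j, 0 ≤ A i j) : ∀ n i j, 0 ≤ (A ^ n) i j := by
  intro n
  induction n with
  | zero => intro i j; simp [Matrix.one_apply]; positivity
  | succ n ih =>
      intro i j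
      rw [pow_succ, Matrix.mul_apply]
      exact Finset.sum_nonneg fun l _ => mul_nonneg (ih i l) (hA l j)

lemma transgen_pow_pos {K : ℕ} (A : Matrix (Fin K) (Fin K) ℝ)
    (hA : ∀ i j, 0 ≤ A i j) {i j : Fin K}
    (h : Relation.TransGen (fun i j => 0 < A i j) i j) :
    ∃ m, 0 < m ∧ 0 < (A ^ m) i j := by
  induction h with
  | single h => exact ⟨1, one_pos, by simpa using h⟩
  | tail _ hbc ih =>
      obtain ⟨m, hm, hpos⟩ := ih
      refine ⟨m + 1, Nat.succ_pos _, ?_⟩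
      rw [pow_succ, Matrix.mul_apply]
      refine Finset.sum_pos' (fun l _ => mul_nonneg (pow_entry_nonneg A hA m _ _) (hA _ _)) ?_
      exact ⟨_, Finset.mem_univ _, mul_pos hpos hbc⟩

/-- If `A` has nonnegative entries and `trace (exp A) = K`, then the directed
graph with edges `{(i,j) : A i j > 0}` contains no directed cycle. -/
theorem trace_exp_eq_card_acyclic {K : ℕ} (A : Matrix (Fin K) (Fin K) ℝ)
    (hA : ∀ i j, 0 ≤ A i j) (htr : (NormedSpace.exp A).trace = K) :
    ∀ i, ¬ Relation.TransGen (fun i j => 0 < A i j) i i := by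
  intro i hcyc
  obtain ⟨m, hm, hpos⟩ := transgen_pow_pos A hA hcyc
  letI : SeminormedRing (Matrix (Fin K) (Fin K) ℝ) := Matrix.linftyOpSemiNormedRing
  letI : NormedRing (Matrix (Fin K) (Fin K) ℝ) := Matrix.linftyOpNormedRing
  letI : NormedAlgebra ℝ (Matrix (Fin K) (Fin K) ℝ) := Matrix.linftyOpNormedAlgebra
  have hsum : HasSum (fun n : ℕ => ((n.factorial : ℝ)⁻¹ • A ^ n)) (NormedSpace.exp A) :=
    NormedSpace.exp_series_hasSum_exp' A
  have htrace : HasSum (fun n : ℕ => ((n.factorial : ℝ)⁻¹ • A ^ n).trace)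
      (NormedSpace.exp A).trace := by
    refine hsum.map (Matrix.traceLinearMap (Fin K) ℝ ℝ).toAddMonoidHom ?_
    exact (Matrix.traceLinearMap (Fin K) ℝ ℝ).continuous_of_finiteDimensional
  set f : ℕ → ℝ := fun n => ((n.factorial : ℝ)⁻¹ • A ^ n).trace with hf
  have hnonneg : ∀ n, 0 ≤ f n := fun n => by
    simp only [hf, Matrix.trace_smul, smul_eq_mul]
    refine mul_nonneg (by positivity) ?_
    exact Finset.sum_nonneg fun l _ => pow_entry_nonneg A hA n l l
  have hle : ∑ n ∈ ({0, m} : Finset ℕ), f n ≤ (NormedSpace.exp A).trace :=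
    Summable.sum_le_tsum _ (fun n _ => hnonneg n) htrace.summable |>.trans_eq htrace.tsum_eq
  rw [Finset.sum_pair hm.ne] at hle
  have hf0 : f 0 = K := by simp [hf, Matrix.trace_one]
  have hfm : 0 < f m := by
    simp only [hf, Matrix.trace_smul, smul_eq_mul]
    refine mul_pos (by positivity) ?_
    refine Finset.sum_pos' (fun l _ => pow_entry_nonneg A hA m l l) ⟨i, Finset.mem_univ _, hpos⟩
  rw [htr, hf0] at hle
  linarith
end

section
/- Let p(C1,C2 | I1,I2) factorize according to the graph C1 → C2 under perfect interventions: p(C1,C2|I1=0,I2) = p(C1)·q(C2|C1,I2) and p(C1,C2|I1=1,I2) = p̃(C1)·q(C2|C1,I2), where q(C2|C1,I2=1) = p̃₂(C2) does not depend on C1. Suppose the anti-causal factorization p(C2|I2)·r(C1|C2) with r not depending on I2 reproduces these distributions for all intervention settings. Then for almost all c1, c2: p(C1 = c1 | C2 = c2, I2 = 1) = p(C1 = c1 | I1) and p(C1 = c1 | C2 = c2, I2 = 0) = p(C1 = c1 | C2 = c2, I1), so r must depend on I2 whenever C1 and C2 are not conditionally independent under I2 = 0; this is a contradiction. -/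
open Finset

/-- Non-identifiability contradiction for the anti-causal factorization.
The true model has graph `C1 → C2` with perfect interventions: with `I1 = 0`,
the joint is `p(c1, c2 | I2) = p1(c1) · q(c1, I2, c2)` where under an
intervention on `C2` (`I2 = true`) the conditional `q(c1, true, ·) = p2t` does
not depend on `c1`.  If the observational and interventional regimes share full
support and `C1, C2` are dependent in the observational regime, then there is
no factorization `p(c1, c2 | I2) = p(c2 | I2) · r(c2, c1)` with `r` independent
of `I2` that reproduces the joint for both values of `I2`. -/
theorem no_anticausal_factorization {C1 C2 : Type*} [Fintype C1] [Fintype C2]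
    (p1 : C1 → ℝ) (q : C1 → Bool → C2 → ℝ) (p2t : C2 → ℝ)
    (hp1pos : ∀ c1, 0 < p1 c1) (hp1sum : ∑ c1, p1 c1 = 1)
    (hqpos : ∀ c1 i2 c2, 0 ≤ q c1 i2 c2) (hqsum : ∀ c1 i2, ∑ c2, q c1 i2 c2 = 1)
    -- perfect intervention on C2: the intervened conditional is a fixed marginal
    (hperfect : ∀ c1 c2, q c1 true c2 = p2t c2)
    (hp2tpos : ∀ c2, 0 < p2t c2)
    -- faithfulness/dependence of C1 and C2 in the observational regime:
    (hdep : ∃ c1 c2, q c1 false c2 ≠ ∑ c1', p1 c1' * q c1' false c2) :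
    ¬ ∃ r : C2 → C1 → ℝ, ∀ (i2 : Bool) (c1 : C1) (c2 : C2),
        p1 c1 * q c1 i2 c2 = (∑ c1', p1 c1' * q c1' i2 c2) * r c2 c1 := by
  rintro ⟨r, hr⟩
  have hrval : ∀ c2 c1, r c2 c1 = p1 c1 := by
    intro c2 c1
    have h := hr true c1 c2
    simp only [hperfect] at h
    rw [show (∑ c1', p1 c1' * p2t c2) = p2t c2 by
      rw [← Finset.sum_mul, hp1sum, one_mul]] at h
    rw [mul_comm (p1 c1)] at h
    exact (mul_left_cancel₀ (hp2tpos c2).ne' h).symm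
  obtain ⟨c1, c2, hne⟩ := hdep
  apply hne
  have h := hr false c1 c2
  rw [hrval] at h
  have hp := (hp1pos c1).ne'
  rw [mul_comm (∑ c1', p1 c1' * q c1' false c2) (p1 c1)] at h
  exact mul_left_cancel₀ hp h
end
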